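/- (Root-counting continuity, proof step of Lemma 3.1.) Let X be a topological space, φ : X → Polynomial ℂ a continuous family of monic polynomials of degree n, p ∈ X, a ∈ ℂ, and let b be the multiplicity of a as a root of φ(p) (b = rootMultiplicity a (φ p); b = 0 if a is not a root). Then there exists ε₀ > 0 such that for every ε with 0 < ε ≤ ε₀ there is an open neighborhood U of p such that for every q ∈ U the number of roots of φ(q) lying in the open disc {z ∈ ℂ : |z − a| < ε}, counted with multiplicity, equals b. -/

import Mathlib

open Polynomial Finset

noncomputable def rcP (n : ℕ) (r : Fin n → ℂ) : Polynomial ℂ := ∏ i, (X - C (r i))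

lemma rcP_monic (n : ℕ) (r : Fin n → ℂ) : (rcP n r).Monic :=
  monic_prod_of_monic _ _ fun i _ => monic_X_sub_C (r i)

lemma rcP_natDegree (n : ℕ) (r : Fin n → ℂ) : (rcP n r).natDegree = n := by
  rw [rcP, natDegree_prod_of_monic _ _ fun i _ => monic_X_sub_C (r i)]
  simp

lemma rcP_roots (n : ℕ) (r : Fin n → ℂ) :
    (rcP n r).roots = (Finset.univ.val.map r) := by
  have := Polynomial.roots_multiset_prod_X_sub_C (Finset.univ.val.map r)
  rw [Multiset.map_map] at this
  rw [← this]
  rfl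

lemma rcP_coeff (n : ℕ) (r : Fin n → ℂ) (k : Fin n) :
    (rcP n r).coeff k = ∑ t ∈ Finset.univ.powersetCard (n - (k : ℕ)), ∏ i ∈ t, (-(r i)) := by
  have : rcP n r = ∏ i, (X + C ((-r) i)) := by
    simp [rcP, sub_eq_add_neg]
  rw [this, Finset.prod_X_add_C_coeff]
  · simp
  · simp [Nat.le_of_lt k.2]

/-- the coefficient map -/
noncomputable def rcπ (n : ℕ) (r : Fin n → ℂ) : Fin n → ℂ := fun j => (rcP n r).coeff j

lemma rcπ_continuous (n : ℕ) : Continuous (rcπ n) := by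
  refine continuous_pi fun j => ?_
  have : (fun r : Fin n → ℂ => (rcP n r).coeff j)
      = fun r => ∑ t ∈ Finset.univ.powersetCard (n - (j : ℕ)), ∏ i ∈ t, (-(r i)) := by
    funext r; exact rcP_coeff n r j
  rw [show (fun r : Fin n → ℂ => rcπ n r j) = fun r => (rcP n r).coeff j from rfl, this]
  exact continuous_finset_sum _ fun t _ =>
    continuous_finset_prod _ fun i _ => (continuous_apply i).neg

lemma rcπ_proper (n : ℕ) : IsProperMap (rcπ n) := by
  rw [isProperMap_iff_isCompact_preimage]
  refine ⟨rcπ_continuous n, fun K hK => ?_⟩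
  obtain ⟨R, hR⟩ := isBounded_iff_forall_norm_le.mp hK.isBounded
  apply Metric.isCompact_of_isClosed_isBounded
  · exact hK.isClosed.preimage (rcπ_continuous n)
  · rw [Metric.isBounded_iff_subset_closedBall 0]
    refine ⟨R + 1, fun r hr => ?_⟩
    simp only [Metric.mem_closedBall, dist_zero_right]
    have hRnn : (0:ℝ) ≤ R := le_trans (norm_nonneg _) (hR _ hr)
    rw [pi_norm_le_iff_of_nonneg (by linarith)]
    intro i
    have hroot : (rcP n r).IsRoot (r i) := by
      simp only [rcP, IsRoot.def, eval_prod]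
      exact Finset.prod_eq_zero (Finset.mem_univ i) (by simp)
    have hlt := hroot.norm_lt_cauchyBound (rcP_monic n r).ne_zero
    have hcb : (cauchyBound (rcP n r) : ℝ) ≤ R + 1 := by
      have h1 : cauchyBound (rcP n r) ≤ ⟨R, hRnn⟩ + 1 := by
        rw [cauchyBound, (rcP_monic n r).leadingCoeff, nnnorm_one, div_one]
        refine add_le_add_left (Finset.sup_le fun j hj => ?_) 1
        rw [Finset.mem_range, rcP_natDegree] at hj
        have he : (rcP n r).coeff j = rcπ n r ⟨j, hj⟩ := rfl
        rw [he]; apply NNReal.coe_le_coe.mp; rw [coe_nnnorm]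
        calc ‖rcπ n r ⟨j, hj⟩‖ ≤ ‖rcπ n r‖ := norm_le_pi_norm _ _
          _ ≤ R := hR _ hr
      calc (cauchyBound (rcP n r) : ℝ) ≤ ((⟨R, hRnn⟩ + 1 : NNReal) : ℝ) := by exact_mod_cast h1
        _ = R + 1 := by push_cast; rfl
    calc ‖r i‖ ≤ (cauchyBound (rcP n r) : ℝ) := le_of_lt (by exact_mod_cast hlt)
      _ ≤ R + 1 := hcb


lemma rc_enum {n : ℕ} (s : Multiset ℂ) (h : n = Multiset.card s) :
    ∃ r : Fin n → ℂ, Finset.univ.val.map r = s := by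
  obtain ⟨l, rfl⟩ : ∃ l : List ℂ, ↑l = s := ⟨s.toList, s.coe_toList⟩
  rw [Multiset.coe_card] at h
  subst h
  refine ⟨l.get, ?_⟩
  have h1 : (Finset.univ.val : Multiset (Fin l.length)) = ↑(List.finRange l.length) := rfl
  rw [h1, Multiset.map_coe, ← List.ofFn_eq_map, List.ofFn_get]

lemma rc_monic_ext {n : ℕ} {P Q : Polynomial ℂ} (hP : P.Monic) (hQ : Q.Monic)
    (hPd : P.natDegree = n) (hQd : Q.natDegree = n)
    (h : ∀ j : Fin n, P.coeff j = Q.coeff j) : P = Q := by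
  ext j
  rcases lt_trichotomy j n with hj | hj | hj
  · exact h ⟨j, hj⟩
  · subst hj
    rw [show P.natDegree = P.natDegree from rfl] at hPd
    conv_lhs => rw [← hPd, hP.coeff_natDegree]
    rw [← hQd, hQ.coeff_natDegree]
  · rw [coeff_eq_zero_of_natDegree_lt (by rw [hPd]; exact hj),
      coeff_eq_zero_of_natDegree_lt (by rw [hQd]; exact hj)]

lemma rc_closed_card_ge {n k : ℕ} {S : Set ℂ} [DecidablePred (· ∈ S)] (hS : IsClosed S) :
    IsClosed {r : Fin n → ℂ | k ≤ (Finset.univ.filter fun i => r i ∈ S).card} := by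
  classical
  have heq : {r : Fin n → ℂ | k ≤ (Finset.univ.filter fun i => r i ∈ S).card}
      = ⋃ t ∈ {t : Finset (Fin n) | t.card = k}, {r | ∀ i ∈ t, r i ∈ S} := by
    ext r
    simp only [Set.mem_setOf_eq, Set.mem_iUnion, exists_prop]
    constructor
    · intro h
      obtain ⟨t, hts, htc⟩ := Finset.exists_subset_card_eq h
      exact ⟨t, htc, fun i hi => (Finset.mem_filter.mp (hts hi)).2⟩
    · rintro ⟨t, htc, h⟩
      calc k = t.card := htc.symm
        _ ≤ _ := Finset.card_le_card fun i hi =>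
            Finset.mem_filter.mpr ⟨Finset.mem_univ _, h i hi⟩
  rw [heq]
  refine (Set.toFinite _).isClosed_biUnion fun t _ => ?_
  have : {r : Fin n → ℂ | ∀ i ∈ t, r i ∈ S} = ⋂ i ∈ t, {r : Fin n → ℂ | r i ∈ S} := by
    ext r; simp
  rw [this]
  exact isClosed_biInter fun i _ => hS.preimage (continuous_apply i)

lemma rc_card_filter {n : ℕ} (r : Fin n → ℂ) (pred : ℂ → Prop) [DecidablePred pred] :
    (Finset.univ.filter fun i => pred (r i)).card
      = Multiset.card ((Finset.univ.val.map r).filter pred) := by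
  rw [Multiset.filter_map, Multiset.card_map]
  rfl



/-- Root-counting continuity: for a continuous family `φ` of monic complex polynomials of
degree `n`, if `b` is the multiplicity of `a` as a root of `φ(p)`, then for every small
enough `ε > 0` there is a neighborhood `U` of `p` on which the number of roots of `φ(q)` in
the disc of radius `ε` about `a`, counted with multiplicity, equals `b`. -/
theorem root_counting_continuity {X : Type*} [TopologicalSpace X] {n : ℕ}
    (φ : X → Polynomial ℂ)
    (hmonic : ∀ x, (φ x).Monic) (hdeg : ∀ x, (φ x).natDegree = n)
    (hcont : ∀ j, Continuous fun x => (φ x).coeff j)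
    (p : X) (a : ℂ) (b : ℕ) (hb : b = (φ p).rootMultiplicity a) :
    ∃ ε₀ > (0 : ℝ), ∀ ε : ℝ, 0 < ε → ε ≤ ε₀ →
      ∃ U : Set X, IsOpen U ∧ p ∈ U ∧
        ∀ q ∈ U, (((φ q).roots).filter (fun z => dist z a < ε)).card = b := by
  classical
  have hroots_card : ∀ x, Multiset.card (φ x).roots = n := fun x => by
    rw [← hdeg x]
    exact splits_iff_card_roots.mp (IsAlgClosed.splits (φ x))
  have hbn : b ≤ n := by
    rw [hb, ← Polynomial.count_roots]
    exact le_trans (Multiset.count_le_card _ _) (le_of_eq (hroots_card p))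
  set s : Finset ℂ := (φ p).roots.toFinset.erase a with hs
  have hsinf : ∀ h : s.Nonempty, 0 < s.inf' h fun z => dist z a := by
    intro h
    rw [Finset.lt_inf'_iff]
    intro z hz
    exact dist_pos.mpr (Finset.ne_of_mem_erase hz)
  set ε₀ : ℝ := if h : s.Nonempty then (s.inf' h fun z => dist z a) / 2 else 1 with hε₀
  have hε₀pos : 0 < ε₀ := by
    rw [hε₀]; split_ifs with h
    · linarith [hsinf h]
    · norm_num
  refine ⟨ε₀, hε₀pos, fun ε hε hεε₀ => ?_⟩
  have hkey : ∀ z ∈ (φ p).roots, dist z a ≤ ε → z = a := by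
    intro z hz hdist
    by_contra hza
    have hzs : z ∈ s := Finset.mem_erase.mpr ⟨hza, Multiset.mem_toFinset.mpr hz⟩
    have h1 : s.Nonempty := ⟨z, hzs⟩
    have h2 : (s.inf' h1 fun w => dist w a) ≤ dist z a := Finset.inf'_le _ hzs
    rw [hε₀, dif_pos h1] at hεε₀
    have h3 := hsinf h1
    linarith [hdist.trans hεε₀]
  -- count of roots of `φ p` in the closed/open disc is `b`
  have hb_le : Multiset.card ((φ p).roots.filter fun z => dist z a ≤ ε) = b := by
    have heq : (φ p).roots.filter (fun z => dist z a ≤ ε) = (φ p).roots.filter (a = ·) := by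
      apply Multiset.filter_congr
      intro z hz
      constructor
      · intro h; exact (hkey z hz h).symm
      · rintro rfl; simpa using le_of_lt hε
    rw [heq, ← Multiset.count_eq_card_filter_eq, Polynomial.count_roots, hb]
  have hb_lt : Multiset.card ((φ p).roots.filter fun z => dist z a < ε) = b := by
    have heq : (φ p).roots.filter (fun z => dist z a < ε) = (φ p).roots.filter (a = ·) := by
      apply Multiset.filter_congr
      intro z hz
      constructor
      · intro h; exact (hkey z hz h.le).symm
      · rintro rfl; simpa using hε
    rw [heq, ← Multiset.count_eq_card_filter_eq, Polynomial.count_roots, hb]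
  set cmap : X → (Fin n → ℂ) := fun x j => (φ x).coeff j with hcmap
  have hcmapc : Continuous cmap := continuous_pi fun j => hcont j
  set Cbad : Set (Fin n → ℂ) :=
    {r | b + 1 ≤ (Finset.univ.filter fun i => r i ∈ Metric.closedBall a ε).card}
    ∪ {r | n - b + 1 ≤ (Finset.univ.filter fun i => r i ∈ {z : ℂ | ε ≤ dist z a}).card}
    with hCbad
  have hCclosed : IsClosed Cbad :=
    (rc_closed_card_ge Metric.isClosed_closedBall).union
      (rc_closed_card_ge (isClosed_le continuous_const (continuous_id.dist continuous_const)))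
  have himg : IsClosed (rcπ n '' Cbad) := (rcπ_proper n).isClosedMap _ hCclosed
  refine ⟨cmap ⁻¹' (rcπ n '' Cbad)ᶜ, himg.isOpen_compl.preimage hcmapc, ?_, ?_⟩
  · -- `p` belongs to `U`
    simp only [Set.mem_preimage, Set.mem_compl_iff]
    rintro ⟨r, hrC, hre⟩
    have hPr : rcP n r = φ p :=
      rc_monic_ext (rcP_monic n r) (hmonic p) (rcP_natDegree n r) (hdeg p)
        (fun j => congrFun hre j)
    have hroots : Finset.univ.val.map r = (φ p).roots := by rw [← rcP_roots n r, hPr]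
    have hin : (Finset.univ.filter fun i => r i ∈ Metric.closedBall a ε).card = b := by
      rw [rc_card_filter r (· ∈ Metric.closedBall a ε), hroots]
      simpa [Metric.mem_closedBall] using hb_le
    have hout : (Finset.univ.filter fun i => r i ∈ {z : ℂ | ε ≤ dist z a}).card = n - b := by
      rw [rc_card_filter r (· ∈ {z : ℂ | ε ≤ dist z a}), hroots]
      have hsum := congrArg Multiset.card
        (Multiset.filter_add_not (fun z => dist z a < ε) (φ p).roots)
      rw [Multiset.card_add, hroots_card p, hb_lt] at hsum
      have heq : (φ p).roots.filter (fun z => ¬ dist z a < ε)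
          = (φ p).roots.filter (fun z => z ∈ {z : ℂ | ε ≤ dist z a}) := by
        apply Multiset.filter_congr
        intro z _
        simp [not_lt]
      rw [heq] at hsum
      omega
    rcases hrC with h | h
    · rw [Set.mem_setOf_eq, hin] at h; omega
    · rw [Set.mem_setOf_eq, hout] at h; omega
  · -- the root count on `U`
    intro q hq
    simp only [Set.mem_preimage, Set.mem_compl_iff] at hq
    obtain ⟨r, hr⟩ := rc_enum (φ q).roots (hroots_card q).symm
    have hPr : rcP n r = φ q := by
      rw [rcP, Finset.prod_eq_multiset_prod]
      have : (Finset.univ.val.map fun i => Polynomial.X - C (r i))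
          = ((Finset.univ.val.map r).map fun z => Polynomial.X - C z) := by
        rw [Multiset.map_map]; rfl
      rw [this, hr]
      exact prod_multiset_X_sub_C_of_monic_of_roots_card_eq (hmonic q)
        (by rw [hroots_card q, hdeg q])
    have hre : rcπ n r = cmap q := funext fun j => by
      show (rcP n r).coeff j = (φ q).coeff j
      rw [hPr]
    have hrC : r ∉ Cbad := fun h => hq ⟨r, h, hre⟩
    rw [hCbad, Set.mem_union, not_or, Set.mem_setOf_eq, Set.mem_setOf_eq, not_le, not_le] at hrC
    obtain ⟨h1, h2⟩ := hrC
    rw [rc_card_filter r (· ∈ Metric.closedBall a ε), hr] at h1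
    rw [rc_card_filter r (· ∈ {z : ℂ | ε ≤ dist z a}), hr] at h2
    -- rewrite the closed-ball filter
    have hin' : Multiset.card ((φ q).roots.filter fun z => dist z a ≤ ε) ≤ b := by
      have : ((φ q).roots.filter fun z => z ∈ Metric.closedBall a ε)
          = ((φ q).roots.filter fun z => dist z a ≤ ε) := by
        apply Multiset.filter_congr; intro z _; simp [Metric.mem_closedBall]
      rw [this] at h1; omega
    have hout' : Multiset.card ((φ q).roots.filter fun z => ε ≤ dist z a) ≤ n - b := by
      have : ((φ q).roots.filter fun z => z ∈ {w : ℂ | ε ≤ dist w a})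
          = ((φ q).roots.filter fun z => ε ≤ dist z a) := by
        apply Multiset.filter_congr; intro z _; simp
      rw [this] at h2; omega
    have hmono : Multiset.card ((φ q).roots.filter fun z => dist z a < ε)
        ≤ Multiset.card ((φ q).roots.filter fun z => dist z a ≤ ε) :=
      Multiset.card_le_card (Multiset.monotone_filter_right _ fun z hz => le_of_lt hz)
    have hsum := congrArg Multiset.card
      (Multiset.filter_add_not (fun z => dist z a < ε) (φ q).roots)
    rw [Multiset.card_add, hroots_card q] at hsum
    have heq : ((φ q).roots.filter fun z => ¬ dist z a < ε)
        = ((φ q).roots.filter fun z => ε ≤ dist z a) := by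
      apply Multiset.filter_congr; intro z _; simp [not_lt]
    rw [heq] at hsum
    omega
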